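/- Consider the Heisenberg Lie algebra g_- = ℝx1 ⊕ ℝx2 ⊕ ℝx3 with only nonzero bracket [x2,x3] = 4x1, endowed with the complex structure J on g_{-1} = ℝx2 ⊕ ℝx3 given by J(x2) = x3, J(x3) = −x2. Then the space g_0 of grading-preserving, J-compatible derivations of g_- is exactly 2-dimensional, spanned by the derivations x4: (x1 ↦ −2x1, x2 ↦ −x2, x3 ↦ −x3) and x5: (x1 ↦ 0, x2 ↦ −x3, x3 ↦ x2). -/

import Mathlib

/-- The Heisenberg Lie algebra `g_- = ℝx1 ⊕ ℝx2 ⊕ ℝx3` (coordinates `0,1,2` of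
`Fin 3 → ℝ`) with only nonzero bracket `[x2,x3] = 4x1`. -/
def hBracket (u v : Fin 3 → ℝ) : Fin 3 → ℝ :=
  ![4 * (u 1 * v 2 - u 2 * v 1), 0, 0]

/-- The complex structure `J` on `g_{-1}`: `J(x2) = x3`, `J(x3) = −x2`
(extended by `0` on `x1`). -/
noncomputable def Jmap : (Fin 3 → ℝ) →ₗ[ℝ] (Fin 3 → ℝ) :=
  Matrix.toLin' !![(0 : ℝ), 0, 0; 0, 0, -1; 0, 1, 0]

/-- The derivation `x4 : x1 ↦ −2x1, x2 ↦ −x2, x3 ↦ −x3`. -/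
noncomputable def X4 : (Fin 3 → ℝ) →ₗ[ℝ] (Fin 3 → ℝ) :=
  Matrix.toLin' !![(-2 : ℝ), 0, 0; 0, -1, 0; 0, 0, -1]

/-- The derivation `x5 : x1 ↦ 0, x2 ↦ −x3, x3 ↦ x2`. -/
noncomputable def X5 : (Fin 3 → ℝ) →ₗ[ℝ] (Fin 3 → ℝ) :=
  Matrix.toLin' !![(0 : ℝ), 0, 0; 0, 0, 1; 0, -1, 0]

lemma vec_decomp (v : Fin 3 → ℝ) :
    v = v 0 • ![(1:ℝ),0,0] + v 1 • ![(0:ℝ),1,0] + v 2 • ![(0:ℝ),0,1] := by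
  funext i; fin_cases i <;> simp

lemma comb_apply (a b : ℝ) (v : Fin 3 → ℝ) :
    (a • X4 + b • X5) v = ![-2*a*v 0, -a*v 1 + b*v 2, -b*v 1 - a*v 2] := by
  funext i
  fin_cases i <;>
    simp [X4, X5, Matrix.toLin'_apply, Matrix.mulVec, dotProduct,
      Fin.sum_univ_three] <;> ring

lemma Jmap_apply (w : Fin 3 → ℝ) : Jmap w = ![0, -w 2, w 1] := by
  funext i
  fin_cases i <;>
    simp [Jmap, Matrix.toLin'_apply, Matrix.mulVec, dotProduct, Fin.sum_univ_three]

/-- The space `g_0` of grading-preserving, `J`-compatible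
derivations of the Heisenberg algebra `g_-` is exactly 2-dimensional, spanned
by `x4` and `x5`. -/
theorem tanaka_g0 :
    (∀ D : (Fin 3 → ℝ) →ₗ[ℝ] (Fin 3 → ℝ),
      ((∀ v : Fin 3 → ℝ, v 1 = 0 ∧ v 2 = 0 → D v 1 = 0 ∧ D v 2 = 0) ∧
       (∀ v : Fin 3 → ℝ, v 0 = 0 → D v 0 = 0) ∧
       (∀ y z : Fin 3 → ℝ, D (hBracket y z) = hBracket (D y) z + hBracket y (D z)) ∧
       (∀ v : Fin 3 → ℝ, v 0 = 0 → D (Jmap v) = Jmap (D v)))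
      ↔ ∃ a b : ℝ, D = a • X4 + b • X5) ∧
    (∀ a b : ℝ, a • X4 + b • X5 = 0 → a = 0 ∧ b = 0) := by
  constructor
  · intro D
    constructor
    · rintro ⟨h1, h2, h3, h4⟩
      set e0 : Fin 3 → ℝ := ![1,0,0] with he0
      set e1 : Fin 3 → ℝ := ![0,1,0] with he1
      set e2 : Fin 3 → ℝ := ![0,0,1] with he2
      obtain ⟨h01, h02⟩ := h1 e0 ⟨by simp [he0], by simp [he0]⟩
      have h10 : D e1 0 = 0 := h2 e1 (by simp [he1])
      -- J-compatibility: D e2 = Jmap (D e1)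
      have hJ : D e2 = Jmap (D e1) := by
        have := h4 e1 (by simp [he1])
        have hje : Jmap e1 = e2 := by rw [Jmap_apply]; funext i; fin_cases i <;> simp [he1, he2]
        rwa [hje] at this
      have h20 : D e2 0 = 0 := by rw [hJ, Jmap_apply]; simp
      have h21 : D e2 1 = -(D e1 2) := by rw [hJ, Jmap_apply]; simp
      have h22 : D e2 2 = D e1 1 := by rw [hJ, Jmap_apply]; simp
      -- derivation: D e0 0 = 2 * D e1 1
      have hbr : hBracket e1 e2 = (4:ℝ) • e0 := by
        funext i; fin_cases i <;> simp [hBracket, he0, he1, he2]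
      have hder := h3 e1 e2
      rw [hbr, map_smul] at hder
      have hder0 := congrFun hder 0
      have h00 : D e0 0 = 2 * D e1 1 := by
        simp [hBracket, he1, he2] at hder0
        rw [h22] at hder0
        linarith
      refine ⟨-(D e1 1), -(D e1 2), ?_⟩
      apply LinearMap.ext
      intro v
      have hv : D v = v 0 • D e0 + v 1 • D e1 + v 2 • D e2 := by
        conv_lhs => rw [vec_decomp v]
        simp only [map_add, map_smul, he0, he1, he2]
      rw [comb_apply, hv]
      funext i
      fin_cases i <;>
        simp [h01, h02, h10, h20, h21, h22, h00] <;> ring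
    · rintro ⟨a, b, rfl⟩
      refine ⟨?_, ?_, ?_, ?_⟩
      · intro v ⟨hv1, hv2⟩
        rw [comb_apply]; simp [hv1, hv2]
      · intro v hv0
        rw [comb_apply]; simp [hv0]
      · intro y z
        rw [comb_apply, comb_apply, comb_apply]
        funext i
        fin_cases i <;> simp [hBracket] <;> ring
      · intro v hv0
        rw [comb_apply, Jmap_apply, Jmap_apply, comb_apply]
        funext i
        fin_cases i <;> simp <;> ring
  · intro a b hab
    have h := LinearMap.congr_fun hab ![(0:ℝ),1,0]
    rw [comb_apply] at h
    have h1 := congrFun h 1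
    have h2 := congrFun h 2
    simp at h1 h2
    constructor <;> linarith
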